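/- Let q ∈ (0,1) be fixed and let m : ℕ → ℕ be a function with m(n) = O(n) (i.e., there is a constant A with m(n) ≤ A·n for all sufficiently large n). Then M(q,n)^{m(n)} = Θ((2πnq(1−q))^{−m(n)/2}) as n → ∞; i.e., there exist constants C₁, C₂, N > 0 such that C₁·(2πnq(1−q))^{−m(n)/2} ≤ M(q,n)^{m(n)} ≤ C₂·(2πnq(1−q))^{−m(n)/2} for all n > N. -/

import Mathlib

open Finset

/-- The binomial probability mass function. -/
noncomputable def phi (q : ℝ) (k n : ℕ) : ℝ :=
  (n.choose k : ℝ) * q ^ k * (1 - q) ^ (n - k)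
/-- The maximum of the binomial pmf with parameters n and q. -/
noncomputable def Mq (q : ℝ) (n : ℕ) : ℝ :=
  (Finset.range (n + 1)).sup' Finset.nonempty_range_add_one (fun k => phi q k n)

open Real

lemma phi_pos {q : ℝ} (hq0 : 0 < q) (hq1 : q < 1) {k n : ℕ} (hk : k ≤ n) : 0 < phi q k n := by
  have := Nat.choose_pos hk
  unfold phi
  have hc : (0:ℝ) < (n.choose k : ℝ) := by exact_mod_cast this
  have h1q : (0:ℝ) < 1 - q := by linarith
  exact mul_pos (mul_pos hc (pow_pos hq0 k)) (pow_pos h1q (n-k))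

lemma phi_succ_ratio (q : ℝ) {k n : ℕ} (hk : k < n) :
    phi q (k+1) n * ((k+1 : ℝ) * (1 - q)) = phi q k n * (((n:ℝ) - k) * q) := by
  unfold phi
  have h1 : (n.choose (k+1) : ℝ) * (k+1) = (n.choose k : ℝ) * ((n:ℝ) - k) := by
    have := Nat.choose_succ_right_eq n k
    have h2 : ((n - k : ℕ) : ℝ) = (n:ℝ) - k := by
      rw [Nat.cast_sub hk.le]
    rw [← h2]
    exact_mod_cast congrArg (Nat.cast : ℕ → ℝ) this
  have h3 : n - k = (n - (k+1)) + 1 := by omega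
  rw [h3, pow_succ, pow_succ]
  linear_combination (q ^ k * q * (1 - q) ^ (n - (k+1)) * (1 - q)) * h1

/-- the mode of the binomial distribution -/
noncomputable def bmode (q : ℝ) (n : ℕ) : ℕ := ⌊((n:ℝ)+1) * q⌋₊

lemma bmode_le {q : ℝ} (hq0 : 0 < q) (hq1 : q < 1) (n : ℕ) : bmode q n ≤ n := by
  have : ((n:ℝ)+1) * q < (n:ℝ) + 1 := by nlinarith [Nat.cast_nonneg (α := ℝ) n]
  have : ⌊((n:ℝ)+1) * q⌋₊ < n + 1 := by
    rw [Nat.floor_lt (by positivity : (0:ℝ) ≤ ((n:ℝ)+1) * q)]; push_cast; linarith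
  simpa [bmode, Nat.lt_succ_iff] using this

lemma phi_step_up {q : ℝ} (hq0 : 0 < q) (hq1 : q < 1) {k n : ℕ} (hk : k < n)
    (h : (k:ℝ) + 1 ≤ ((n:ℝ)+1) * q) : phi q k n ≤ phi q (k+1) n := by
  have h1q : (0:ℝ) < 1 - q := by linarith
  have hr := phi_succ_ratio q hk
  have hp1 := phi_pos hq0 hq1 hk.le (n := n)
  have hkd : (0:ℝ) < ((k:ℝ)+1) * (1-q) := by positivity
  have hge : ((k:ℝ)+1) * (1-q) ≤ ((n:ℝ) - k) * q := by nlinarith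
  have hp2 := phi_pos hq0 hq1 (Nat.succ_le_of_lt hk) (n := n) (k := k+1)
  nlinarith
lemma phi_step_down {q : ℝ} (hq0 : 0 < q) (hq1 : q < 1) {k n : ℕ} (hk : k < n)
    (h : ((n:ℝ)+1) * q ≤ (k:ℝ) + 1) : phi q (k+1) n ≤ phi q k n := by
  have h1q : (0:ℝ) < 1 - q := by linarith
  have hr := phi_succ_ratio q hk
  have hp1 := phi_pos hq0 hq1 hk.le (n := n)
  have hle : ((n:ℝ) - k) * q ≤ ((k:ℝ)+1) * (1-q) := by nlinarith
  have hkd : (0:ℝ) < ((k:ℝ)+1) * (1-q) := by positivity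
  have hq' : (0:ℝ) ≤ ((n:ℝ) - k) * q := by
    have : (k:ℝ) < n := by exact_mod_cast hk
    nlinarith
  nlinarith

lemma phi_le_bmode {q : ℝ} (hq0 : 0 < q) (hq1 : q < 1) {n : ℕ} :
    ∀ k ≤ n, phi q k n ≤ phi q (bmode q n) n := by
  intro k hk
  set K := bmode q n with hK
  have hKn : K ≤ n := bmode_le hq0 hq1 n
  have hfl : (K:ℝ) ≤ ((n:ℝ)+1) * q := Nat.floor_le (by positivity)
  have hfl2 : ((n:ℝ)+1) * q < (K:ℝ) + 1 := Nat.lt_floor_add_one _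
  rcases le_or_gt k K with h | h
  · -- increasing up to K
    have : ∀ j : ℕ, j ≤ K → phi q (K - j) n ≤ phi q K n := by
      intro j
      induction j with
      | zero => simp
      | succ i ih =>
        intro hij
        have hiK : i ≤ K := by omega
        have h1 : K - (i+1) < n := by omega
        have h2 : (K - (i+1)) + 1 = K - i := by omega
        have step : phi q (K - (i+1)) n ≤ phi q (K - i) n := by
          have := phi_step_up hq0 hq1 h1 (q := q) (by
            rw [show ((K - (i+1) : ℕ):ℝ) + 1 = ((K - i : ℕ):ℝ) by
              rw [← h2]; push_cast; ring]
            calc ((K - i : ℕ):ℝ) ≤ (K:ℝ) := by exact_mod_cast Nat.sub_le K i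
              _ ≤ ((n:ℝ)+1) * q := hfl)
          rwa [h2] at this
        exact le_trans step (ih hiK)
    have := this (K - k) (by omega)
    rwa [show K - (K - k) = k by omega] at this
  · -- decreasing after K
    obtain ⟨j, rfl⟩ : ∃ j, k = K + j := ⟨k - K, by omega⟩
    clear h
    induction j with
    | zero => simp
    | succ i ih =>
      have hi : K + i ≤ n := by omega
      have step : phi q (K + i + 1) n ≤ phi q (K + i) n := by
        apply phi_step_down hq0 hq1 (by omega)
        calc ((n:ℝ)+1) * q ≤ (K:ℝ) + 1 := by linarith
          _ ≤ ((K + i : ℕ):ℝ) + 1 := by push_cast; linarith [Nat.cast_nonneg (α := ℝ) i]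
      exact le_trans (by exact_mod_cast step) (ih hi)

lemma Mq_eq_bmode {q : ℝ} (hq0 : 0 < q) (hq1 : q < 1) (n : ℕ) :
    Mq q n = phi q (bmode q n) n := by
  apply le_antisymm
  · apply Finset.sup'_le
    intro k hk
    exact phi_le_bmode hq0 hq1 k (by simpa [Nat.lt_succ_iff] using hk)
  · exact Finset.le_sup' (fun k => phi q k n) (Finset.mem_range.mpr (Nat.lt_succ_of_le (bmode_le hq0 hq1 n)))

lemma stirling_low (n : ℕ) : Real.sqrt π ≤ Stirling.stirlingSeq (n+1) := by
  have h : Filter.Tendsto (Stirling.stirlingSeq ∘ Nat.succ) Filter.atTop (nhds (Real.sqrt π)) :=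
    Stirling.tendsto_stirlingSeq_sqrt_pi.comp (Filter.tendsto_add_atTop_nat 1)
  exact Stirling.stirlingSeq'_antitone.le_of_tendsto h n

lemma stirling_partial (n : ℕ) : ∀ j : ℕ,
    Real.log (Stirling.stirlingSeq (n+1)) - Real.log (Stirling.stirlingSeq (n+1+j)) ≤
      1/4 * (1/((n:ℝ)+1/2) - 1/((n:ℝ)+1/2+j)) := by
  intro j
  induction j with
  | zero => simp
  | succ i ih =>
    have h2 := Stirling.log_stirlingSeq_sub_log_stirlingSeq_succ (n+i+1)
    have hm : (0:ℝ) < (n:ℝ)+1/2+i := by positivity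
    have hm2 : (0:ℝ) < (n:ℝ)+1/2+(i+1) := by positivity
    have key : 1 / (4 * (↑(n + i + 1) : ℝ) ^ 2) ≤
        1/4 * (1/((n:ℝ)+1/2+i) - 1/((n:ℝ)+1/2+(i+1))) := by
      push_cast
      have expand : (1:ℝ)/4 * (1/((n:ℝ)+1/2+i) - 1/((n:ℝ)+1/2+(i+1)))
          = 1/(4 * (((n:ℝ)+1/2+i) * ((n:ℝ)+1/2+(i+1)))) := by
        field_simp
        ring
      rw [expand]
      apply one_div_le_one_div_of_le (by positivity)
      nlinarith [sq_nonneg ((n:ℝ)+i+1)]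
    have hstep : Real.log (Stirling.stirlingSeq (n+1+i)) -
        Real.log (Stirling.stirlingSeq (n+1+(i+1))) ≤ 1 / (4 * (↑(n + i + 1) : ℝ) ^ 2) := by
      have e1 : n+1+i = (n+i)+1 := by omega
      have e2 : n+1+(i+1) = (n+i)+2 := by omega
      rw [e1, e2]
      exact h2
    push_cast at ih ⊢
    linarith

lemma stirling_up (n : ℕ) :
    Real.log (Stirling.stirlingSeq (n+1)) ≤ Real.log (Real.sqrt π) + 1/(2*((n:ℝ)+1)) := by
  have hlim : Filter.Tendsto (fun j => Real.log (Stirling.stirlingSeq (n+1+j)))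
      Filter.atTop (nhds (Real.log (Real.sqrt π))) := by
    have h1 : Filter.Tendsto (fun j : ℕ => Stirling.stirlingSeq (n+1+j))
        Filter.atTop (nhds (Real.sqrt π)) := by
      have := Stirling.tendsto_stirlingSeq_sqrt_pi.comp (Filter.tendsto_add_atTop_nat (n+1))
      convert this using 2 with j
      simp [Function.comp, Nat.add_comm]
    exact ((Real.continuousAt_log (by positivity)).tendsto.comp h1)
  have hb : ∀ j : ℕ, Real.log (Stirling.stirlingSeq (n+1)) - 1/(2*((n:ℝ)+1)) ≤
      Real.log (Stirling.stirlingSeq (n+1+j)) := by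
    intro j
    have h := stirling_partial n j
    have h1 : (0:ℝ) < (n:ℝ)+1/2 := by positivity
    have h2 : (0:ℝ) < (n:ℝ)+1/2+j := by positivity
    have h3 : 1/4 * (1/((n:ℝ)+1/2) - 1/((n:ℝ)+1/2+j)) ≤ 1/(2*((n:ℝ)+1)) := by
      have h4 : (0:ℝ) ≤ 1/((n:ℝ)+1/2+j) := by positivity
      have h5 : 1/((n:ℝ)+1/2) ≤ 2/((n:ℝ)+1) := by
        rw [div_le_div_iff₀ h1 (by positivity)]
        linarith
      calc 1/4 * (1/((n:ℝ)+1/2) - 1/((n:ℝ)+1/2+j)) ≤ 1/4 * (2/((n:ℝ)+1)) := by linarith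
        _ = 1/(2*((n:ℝ)+1)) := by field_simp; ring
    linarith
  have := ge_of_tendsto hlim (Filter.Eventually.of_forall hb)
  linarith

lemma lfac_bounds (n : ℕ) (hn : 1 ≤ n) :
    0 ≤ Real.log (n.factorial : ℝ) - (1/2 * Real.log (2*π*n) + n * (Real.log n - 1)) ∧
    Real.log (n.factorial : ℝ) - (1/2 * Real.log (2*π*n) + n * (Real.log n - 1)) ≤ 1/(2*(n:ℝ)) := by
  obtain ⟨m, rfl⟩ : ∃ m, n = m + 1 := ⟨n - 1, by omega⟩
  have hn0 : (0:ℝ) < ((m+1 : ℕ):ℝ) := by positivity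
  have hform := Stirling.log_stirlingSeq_formula (m+1)
  have hlogdiv : Real.log (((m+1:ℕ):ℝ) / Real.exp 1) = Real.log ((m+1:ℕ):ℝ) - 1 := by
    rw [Real.log_div (by positivity) (Real.exp_ne_zero 1), Real.log_exp]
  have hsplit : 1/2 * Real.log (2*π*((m+1:ℕ):ℝ)) =
      Real.log (Real.sqrt π) + 1/2 * Real.log (2*((m+1:ℕ):ℝ)) := by
    rw [Real.log_sqrt Real.pi_pos.le,
      show (2*π*((m+1:ℕ):ℝ)) = (2*((m+1:ℕ):ℝ)) * π by ring,
      Real.log_mul (by positivity) (ne_of_gt Real.pi_pos)]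
    ring
  have heq : Real.log ((m+1).factorial : ℝ) - (1/2 * Real.log (2*π*((m+1:ℕ):ℝ)) +
      ((m+1:ℕ):ℝ) * (Real.log ((m+1:ℕ):ℝ) - 1)) =
      Real.log (Stirling.stirlingSeq (m+1)) - Real.log (Real.sqrt π) := by
    rw [hsplit]
    rw [hform, hlogdiv]
    push_cast
    ring
  rw [heq]
  constructor
  · have h1 := stirling_low m
    have h2 : (0:ℝ) < Real.sqrt π := by positivity
    have := Real.log_le_log h2 h1
    linarith
  · have := stirling_up m
    have : Real.log (Stirling.stirlingSeq (m+1)) - Real.log (Real.sqrt π) ≤ 1/(2*((m:ℝ)+1)) := by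
      linarith
    convert this using 2
    push_cast
    ring

noncomputable def Bc (q : ℝ) : ℝ := 3/(q*(1-q)) + 1/2 + 1/q + 1/(1-q)

set_option maxHeartbeats 1600000 in
lemma log_Mq_est {q : ℝ} (hq0 : 0 < q) (hq1 : q < 1) (n : ℕ)
    (hn : 8/(q*(1-q)) ≤ (n:ℝ)) :
    |Real.log (Mq q n) + 1/2 * Real.log (2*π*(n:ℝ)*q*(1-q))| ≤ Bc q / n := by
  have h1q : (0:ℝ) < 1 - q := by linarith
  set nr : ℝ := (n:ℝ) with hnr
  have hqq : (0:ℝ) < q*(1-q) := by positivity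
  have hD : 8 ≤ nr*q*(1-q) := by
    rw [div_le_iff₀ hqq] at hn; nlinarith
  have hn0 : (0:ℝ) < nr := by nlinarith
  have hnq : 8 ≤ nr*q := by nlinarith
  have hn1q : 8 ≤ nr*(1-q) := by nlinarith
  have hq4 : q*(1-q) ≤ 1/4 := by nlinarith [sq_nonneg (q-1/2)]
  have hn32 : 32 ≤ nr := by
    have h := mul_le_mul_of_nonneg_left hq4 hn0.le
    linarith
  set K := bmode q n with hK
  set kr : ℝ := (K:ℝ) with hkr
  have hub : kr ≤ nr*q + q := by
    have := Nat.floor_le (by positivity : (0:ℝ) ≤ (nr+1) * q)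
    rw [hkr, hK]; unfold bmode; rw [← hnr]; nlinarith [this]
  have hlb : nr*q + q - 1 < kr := by
    have := Nat.lt_floor_add_one ((nr+1) * q)
    rw [hkr, hK]; unfold bmode; rw [← hnr]; nlinarith [this]
  have hd2 : (kr - nr*q)^2 ≤ 1 := by nlinarith
  have hkr0 : (0:ℝ) < kr := by nlinarith
  have hK1 : 1 ≤ K := by
    have h1 : (1:ℝ) ≤ kr := by nlinarith
    rw [hkr] at h1; exact_mod_cast h1
  have hKn : K < n := by
    have hx : kr < nr := by nlinarith
    rw [hkr, hnr] at hx; exact_mod_cast hx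
  set J := n - K with hJ
  have hJr : (J:ℝ) = nr - kr := by
    rw [hJ, Nat.cast_sub hKn.le]
  set jr : ℝ := nr - kr with hjr
  have hjr0 : (0:ℝ) < jr := by rw [hjr]; nlinarith
  have hJ1 : 1 ≤ J := by
    have h1 : (1:ℝ) ≤ (J:ℝ) := by rw [hJr, hjr]; nlinarith
    exact_mod_cast h1
  have hkrh : nr*q/2 ≤ kr := by nlinarith
  have hjrh : nr*(1-q)/2 ≤ jr := by rw [hjr]; nlinarith
  -- log of Mq
  have hcc : (0:ℝ) < (n.choose K : ℝ) := by exact_mod_cast Nat.choose_pos hKn.le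
  have hMq : Mq q n = (n.choose K : ℝ) * q ^ K * (1-q) ^ J := by
    rw [Mq_eq_bmode hq0 hq1 n]; rfl
  have hchoose : (n.choose K : ℝ) = (n.factorial:ℝ) / ((K.factorial:ℝ) * (J.factorial:ℝ)) :=
    Nat.cast_choose ℝ hKn.le
  have hfn : (0:ℝ) < (n.factorial:ℝ) := by exact_mod_cast Nat.factorial_pos n
  have hfk : (0:ℝ) < (K.factorial:ℝ) := by exact_mod_cast Nat.factorial_pos K
  have hfj : (0:ℝ) < (J.factorial:ℝ) := by exact_mod_cast Nat.factorial_pos J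
  have hlogMq : Real.log (Mq q n) =
      Real.log (n.factorial:ℝ) - Real.log (K.factorial:ℝ) - Real.log (J.factorial:ℝ)
        + (K:ℝ) * Real.log q + (J:ℝ) * Real.log (1-q) := by
    rw [hMq, Real.log_mul (mul_ne_zero hcc.ne' (by positivity)) (by positivity),
        Real.log_mul hcc.ne' (by positivity), hchoose,
        Real.log_div hfn.ne' (by positivity), Real.log_mul hfk.ne' hfj.ne',
        Real.log_pow, Real.log_pow]
    push_cast
    ring
  -- error terms from Stirling
  obtain ⟨he1l, he1u⟩ := lfac_bounds n (by omega)
  obtain ⟨he2l, he2u⟩ := lfac_bounds K hK1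
  obtain ⟨he3l, he3u⟩ := lfac_bounds J hJ1
  rw [← hnr] at he1l he1u
  rw [← hkr] at he2l he2u
  rw [hJr] at he3l he3u
  set E1 : ℝ := Real.log (n.factorial:ℝ) - (1/2 * Real.log (2*π*nr) + nr * (Real.log nr - 1)) with hE1
  set E2 : ℝ := Real.log (K.factorial:ℝ) - (1/2 * Real.log (2*π*kr) + kr * (Real.log kr - 1)) with hE2
  set E3 : ℝ := Real.log (J.factorial:ℝ) - (1/2 * Real.log (2*π*jr) + jr * (Real.log jr - 1)) with hE3
  clear_value nr kr jr E1 E2 E3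
  -- expansions of composite logs
  have hpi : (0:ℝ) < π := Real.pi_pos
  have A1 : Real.log (2*π*nr*q*(1-q)) =
      Real.log 2 + Real.log π + Real.log nr + Real.log q + Real.log (1-q) := by
    rw [Real.log_mul (by positivity) h1q.ne', Real.log_mul (by positivity) hq0.ne',
        Real.log_mul (by positivity) hn0.ne', Real.log_mul (by norm_num) hpi.ne']
  have A2 : Real.log (2*π*nr) = Real.log 2 + Real.log π + Real.log nr := by
    rw [Real.log_mul (by positivity) hn0.ne', Real.log_mul (by norm_num) hpi.ne']
  have A3 : Real.log (2*π*kr) = Real.log 2 + Real.log π + Real.log kr := by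
    rw [Real.log_mul (by positivity) hkr0.ne', Real.log_mul (by norm_num) hpi.ne']
  have A4 : Real.log (2*π*jr) = Real.log 2 + Real.log π + Real.log jr := by
    rw [Real.log_mul (by positivity) hjr0.ne', Real.log_mul (by norm_num) hpi.ne']
  have A5 : Real.log (nr^2*q*(1-q)/(kr*jr)) =
      2*Real.log nr + Real.log q + Real.log (1-q) - Real.log kr - Real.log jr := by
    rw [Real.log_div (by positivity) (mul_ne_zero hkr0.ne' hjr0.ne'), Real.log_mul hkr0.ne' hjr0.ne',
        Real.log_mul (by positivity) h1q.ne', Real.log_mul (by positivity) hq0.ne',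
        Real.log_pow]
    push_cast; ring
  have A6 : Real.log (nr*q/kr) = Real.log nr + Real.log q - Real.log kr := by
    rw [Real.log_div (by positivity) hkr0.ne', Real.log_mul hn0.ne' hq0.ne']
  have A7 : Real.log (nr*(1-q)/jr) = Real.log nr + Real.log (1-q) - Real.log jr := by
    rw [Real.log_div (by positivity) hjr0.ne', Real.log_mul hn0.ne' h1q.ne']
  have key : Real.log (Mq q n) + 1/2 * Real.log (2*π*nr*q*(1-q)) =
      1/2 * Real.log (nr^2*q*(1-q)/(kr*jr))
      + (kr * Real.log (nr*q/kr) + jr * Real.log (nr*(1-q)/jr))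
      + (E1 - E2 - E3) := by
    rw [hlogMq, A1, A5, A6, A7, hE1, hE2, hE3, A2, A3, A4, hJr, ← hkr, hjr]
    ring
  -- bound G2
  have hG2u : kr * Real.log (nr*q/kr) + jr * Real.log (nr*(1-q)/jr) ≤ 0 := by
    have l1 := Real.log_le_sub_one_of_pos (show (0:ℝ) < nr*q/kr by positivity)
    have l2 := Real.log_le_sub_one_of_pos (show (0:ℝ) < nr*(1-q)/jr by positivity)
    have m1 : kr * Real.log (nr*q/kr) ≤ nr*q - kr := by
      have := mul_le_mul_of_nonneg_left l1 hkr0.le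
      have e : kr * (nr*q/kr - 1) = nr*q - kr := by field_simp
      linarith [e ▸ this]
    have m2 : jr * Real.log (nr*(1-q)/jr) ≤ nr*(1-q) - jr := by
      have := mul_le_mul_of_nonneg_left l2 hjr0.le
      have e : jr * (nr*(1-q)/jr - 1) = nr*(1-q) - jr := by field_simp
      linarith [e ▸ this]
    have : nr*q - kr + (nr*(1-q) - jr) = 0 := by rw [hjr]; ring
    linarith
  have hG2l : -(1/(nr*q*(1-q))) ≤ kr * Real.log (nr*q/kr) + jr * Real.log (nr*(1-q)/jr) := by
    have l1 := Real.log_le_sub_one_of_pos (show (0:ℝ) < kr/(nr*q) by positivity)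
    have l2 := Real.log_le_sub_one_of_pos (show (0:ℝ) < jr/(nr*(1-q)) by positivity)
    have i1 : Real.log (kr/(nr*q)) = - Real.log (nr*q/kr) := by
      rw [← Real.log_inv]; congr 1; field_simp
    have i2 : Real.log (jr/(nr*(1-q))) = - Real.log (nr*(1-q)/jr) := by
      rw [← Real.log_inv]; congr 1; field_simp
    rw [i1] at l1
    rw [i2] at l2
    -- log (nr*q/kr) ≥ 1 - kr/(nr*q)
    have m1 : kr * Real.log (nr*q/kr) ≥ kr - kr^2/(nr*q) := by
      have h := mul_le_mul_of_nonneg_left (by linarith : 1 - kr/(nr*q) ≤ Real.log (nr*q/kr)) hkr0.le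
      have e : kr * (1 - kr/(nr*q)) = kr - kr^2/(nr*q) := by field_simp
      linarith [e ▸ h]
    have m2 : jr * Real.log (nr*(1-q)/jr) ≥ jr - jr^2/(nr*(1-q)) := by
      have h := mul_le_mul_of_nonneg_left (by linarith : 1 - jr/(nr*(1-q)) ≤ Real.log (nr*(1-q)/jr)) hjr0.le
      have e : jr * (1 - jr/(nr*(1-q))) = jr - jr^2/(nr*(1-q)) := by field_simp
      linarith [e ▸ h]
    have iden : kr - kr^2/(nr*q) + (jr - jr^2/(nr*(1-q))) = -((kr - nr*q)^2/(nr*q*(1-q))) := by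
      rw [hjr]; field_simp; ring
    have fin : (kr - nr*q)^2/(nr*q*(1-q)) ≤ 1/(nr*q*(1-q)) := by
      gcongr
    linarith
  -- bound G1
  have hProd1 : (kr-nr*q)*(1-2*q) ≤ 1 := by
    nlinarith only [hub, hlb, hq0, hq1, mul_nonneg (by linarith : (0:ℝ) ≤ 1-(kr-nr*q)) (by linarith : (0:ℝ) ≤ 1+(1-2*q)),
      mul_nonneg (by linarith : (0:ℝ) ≤ 1+(kr-nr*q)) (by linarith : (0:ℝ) ≤ 1-(1-2*q))]
  have hProd2 : -((kr-nr*q)*(1-2*q)) ≤ 1 := by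
    nlinarith only [hub, hlb, hq0, hq1, mul_nonneg (by linarith : (0:ℝ) ≤ 1-(kr-nr*q)) (by linarith : (0:ℝ) ≤ 1-(1-2*q)),
      mul_nonneg (by linarith : (0:ℝ) ≤ 1+(kr-nr*q)) (by linarith : (0:ℝ) ≤ 1+(1-2*q))]
  have hmul1 : nr*((kr-nr*q)*(1-2*q)) ≤ nr*1 := mul_le_mul_of_nonneg_left hProd1 hn0.le
  have hmul2 : nr*(-((kr-nr*q)*(1-2*q))) ≤ nr*1 := mul_le_mul_of_nonneg_left hProd2 hn0.le
  have hPD1 : kr*jr - nr^2*q*(1-q) ≤ 2*nr := by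
    rw [hjr]; linarith only [hmul1, sq_nonneg (kr-nr*q), hn0]
  have hPD2 : nr^2*q*(1-q) - kr*jr ≤ 2*nr := by
    rw [hjr]; linarith only [hmul2, hd2, hn32]
  have hDbig : 8*nr ≤ nr^2*q*(1-q) := by
    have h := mul_le_mul_of_nonneg_left hD hn0.le
    linarith only [h]
  have hPpos : (0:ℝ) < kr*jr := by positivity
  have hDpos : (0:ℝ) < nr^2*q*(1-q) := by positivity
  have hPlow : 3/4*(nr^2*q*(1-q)) ≤ kr*jr := by linarith only [hPD2, hDbig]
  have hG1u : Real.log (nr^2*q*(1-q)/(kr*jr)) ≤ 3/(nr*q*(1-q)) := by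
    have l := Real.log_le_sub_one_of_pos (show (0:ℝ) < nr^2*q*(1-q)/(kr*jr) by positivity)
    have : nr^2*q*(1-q)/(kr*jr) - 1 = (nr^2*q*(1-q) - kr*jr)/(kr*jr) := by field_simp
    rw [this] at l
    have b1 : (nr^2*q*(1-q) - kr*jr)/(kr*jr) ≤ (2*nr)/(3/4*(nr^2*q*(1-q))) :=
      div_le_div₀ (by positivity) hPD2 (by positivity) hPlow
    have b2 : (2*nr)/(3/4*(nr^2*q*(1-q))) ≤ 3/(nr*q*(1-q)) := by
      rw [div_le_div_iff₀ (by positivity) (by positivity)]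
      linarith only [hDpos.le]
    linarith only [l, b1, b2]
  have hG1l : -(3/(nr*q*(1-q))) ≤ Real.log (nr^2*q*(1-q)/(kr*jr)) := by
    have l := Real.log_le_sub_one_of_pos (show (0:ℝ) < kr*jr/(nr^2*q*(1-q)) by positivity)
    have i : Real.log (kr*jr/(nr^2*q*(1-q))) = - Real.log (nr^2*q*(1-q)/(kr*jr)) := by
      rw [← Real.log_inv]; congr 1; field_simp
    rw [i] at l
    have : kr*jr/(nr^2*q*(1-q)) - 1 = (kr*jr - nr^2*q*(1-q))/(nr^2*q*(1-q)) := by field_simp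
    rw [this] at l
    have b1 : (kr*jr - nr^2*q*(1-q))/(nr^2*q*(1-q)) ≤ (2*nr)/(nr^2*q*(1-q)) := by
      gcongr
    have b2 : (2*nr)/(nr^2*q*(1-q)) ≤ 3/(nr*q*(1-q)) := by
      rw [div_le_div_iff₀ (by positivity) (by positivity)]
      linarith only [hDpos.le]
    linarith only [l, b1, b2]
  -- error term bounds
  have he2u' : E2 ≤ 1/(nr*q) := by
    have h : 1/(2*kr) ≤ 1/(nr*q) := by
      rw [div_le_div_iff₀ (by positivity) (by positivity)]; linarith only [hkrh]
    linarith only [h, he2u]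
  have he3u' : E3 ≤ 1/(nr*(1-q)) := by
    have h : 1/(2*jr) ≤ 1/(nr*(1-q)) := by
      rw [div_le_div_iff₀ (by positivity) (by positivity)]; linarith only [hjrh]
    linarith only [h, he3u]
  -- combine
  have hG1u' : Real.log (nr^2*q*(1-q)/(kr*jr)) ≤ 3*(1/(nr*q*(1-q))) := by
    rw [show 3*(1/(nr*q*(1-q))) = 3/(nr*q*(1-q)) by ring]; exact hG1u
  have hG1l' : -(3*(1/(nr*q*(1-q)))) ≤ Real.log (nr^2*q*(1-q)/(kr*jr)) := by
    rw [show 3*(1/(nr*q*(1-q))) = 3/(nr*q*(1-q)) by ring]; exact hG1l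
  have hG2l' : -(1*(1/(nr*q*(1-q)))) ≤ kr * Real.log (nr*q/kr) + jr * Real.log (nr*(1-q)/jr) := by
    rw [show 1*(1/(nr*q*(1-q))) = 1/(nr*q*(1-q)) by ring]; exact hG2l
  have hBc : Bc q / nr = 3*(1/(nr*q*(1-q))) + 1/(2*nr) + 1/(nr*q) + 1/(nr*(1-q)) := by
    rw [Bc]; field_simp
  have hu : (0:ℝ) ≤ 1/(nr*q*(1-q)) := by positivity
  have hv : (0:ℝ) ≤ 1/(2*nr) := by positivity
  have hw : (0:ℝ) ≤ 1/(nr*q) := by positivity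
  have hx : (0:ℝ) ≤ 1/(nr*(1-q)) := by positivity
  rw [key, abs_le]
  constructor
  · rw [hBc]
    linarith only [hG1l', hG2l', he1l, he2u', he3u', hu, hv, hw, hx]
  · rw [hBc]
    linarith only [hG1u', hG2u, he1u, he2l, he3l, hu, hv, hw, hx]

lemma Mq_pos {q : ℝ} (hq0 : 0 < q) (hq1 : q < 1) (n : ℕ) : 0 < Mq q n := by
  rw [Mq_eq_bmode hq0 hq1 n]
  exact phi_pos hq0 hq1 (bmode_le hq0 hq1 n)

theorem Mq_pow_theta (q : ℝ) (hq0 : 0 < q) (hq1 : q < 1) (m : ℕ → ℕ)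
    (hm : ∃ A : ℝ, ∀ᶠ n in Filter.atTop, (m n : ℝ) ≤ A * n) :
    ∃ C₁ > (0 : ℝ), ∃ C₂ > (0 : ℝ), ∃ N : ℕ, ∀ n : ℕ, n > N →
      C₁ * (2 * Real.pi * n * q * (1 - q)) ^ (-(m n : ℝ) / 2) ≤ Mq q n ^ m n ∧
      Mq q n ^ m n ≤ C₂ * (2 * Real.pi * n * q * (1 - q)) ^ (-(m n : ℝ) / 2) := by
  have h1q : (0:ℝ) < 1 - q := by linarith
  have hqq : (0:ℝ) < q*(1-q) := by positivity
  obtain ⟨A, hA⟩ := hm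
  rw [Filter.eventually_atTop] at hA
  obtain ⟨N₁, hN₁⟩ := hA
  set A' : ℝ := max A 1 with hA'
  have hA'pos : (0:ℝ) < A' := lt_of_lt_of_le one_pos (le_max_right A 1)
  have hBcpos : (0:ℝ) < Bc q := by
    rw [Bc]; positivity
  set BA : ℝ := Bc q * A' with hBA
  have hBApos : (0:ℝ) < BA := mul_pos hBcpos hA'pos
  refine ⟨Real.exp (-BA), Real.exp_pos _, Real.exp (BA), Real.exp_pos _,
    max N₁ ⌈8/(q*(1-q))⌉₊, fun n hn => ?_⟩
  have hnN₁ : N₁ ≤ n := le_trans (le_max_left _ _) hn.le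
  have hnceil : ⌈8/(q*(1-q))⌉₊ ≤ n := le_trans (le_max_right _ _) hn.le
  have hn8 : 8/(q*(1-q)) ≤ (n:ℝ) := by
    refine le_trans (Nat.le_ceil _) ?_
    exact_mod_cast hnceil
  have hn0 : (0:ℝ) < (n:ℝ) := lt_of_lt_of_le (by positivity) hn8
  have hx : (0:ℝ) < 2*π*(n:ℝ)*q*(1-q) := by positivity
  have hMqpos := Mq_pos hq0 hq1 n
  have est := log_Mq_est hq0 hq1 n hn8
  rw [abs_le] at est
  set a : ℝ := (m n : ℝ) with ha
  have ha0 : (0:ℝ) ≤ a := Nat.cast_nonneg _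
  have hm' : a ≤ A' * n := by
    calc a ≤ A * n := hN₁ n hnN₁
      _ ≤ A' * n := mul_le_mul_of_nonneg_right (le_max_left A 1) hn0.le
  -- bound a * (log Mq + 1/2 log x)
  have hup : a * (Real.log (Mq q n) + 1/2 * Real.log (2*π*(n:ℝ)*q*(1-q))) ≤ BA := by
    calc a * (Real.log (Mq q n) + 1/2 * Real.log (2*π*(n:ℝ)*q*(1-q)))
        ≤ a * (Bc q / n) := mul_le_mul_of_nonneg_left est.2 ha0
      _ ≤ (A' * n) * (Bc q / n) := mul_le_mul_of_nonneg_right hm' (by positivity)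
      _ = BA := by rw [hBA]; field_simp
  have hlow : -BA ≤ a * (Real.log (Mq q n) + 1/2 * Real.log (2*π*(n:ℝ)*q*(1-q))) := by
    have h1 : a * (-(Bc q / n)) ≤ a * (Real.log (Mq q n) + 1/2 * Real.log (2*π*(n:ℝ)*q*(1-q))) :=
      mul_le_mul_of_nonneg_left est.1 ha0
    have h2 : (A' * n) * (-(Bc q / n)) ≤ a * (-(Bc q / n)) := by
      rw [mul_neg, mul_neg, neg_le_neg_iff]
      exact mul_le_mul_of_nonneg_right hm' (by positivity)
    have h3 : (A' * n) * (-(Bc q / n)) = -BA := by rw [hBA]; field_simp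
    linarith
  have e1 : Mq q n ^ m n = Real.exp (a * Real.log (Mq q n)) := by
    rw [ha]
    rw [← Real.exp_log hMqpos, ← Real.exp_nat_mul, Real.exp_log hMqpos]
  have e2 : (2 * Real.pi * (n:ℝ) * q * (1 - q)) ^ (-a / 2) =
      Real.exp ((-a / 2) * Real.log (2*π*(n:ℝ)*q*(1-q))) := by
    rw [Real.rpow_def_of_pos hx, mul_comm]
  constructor
  · rw [e1, e2, ← Real.exp_add, Real.exp_le_exp]
    nlinarith [hlow]
  · rw [e1, e2, ← Real.exp_add, Real.exp_le_exp]
    nlinarith [hup]
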